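/- The number of permutations of [n] avoiding all of 231, 312, and 321 is the Fibonacci number F_{n+1}, where F_0 = 0 and F_1 = 1. -/

import Mathlib

/-- An occurrence of the pattern `σ` in `π` is a strictly increasing choice of
indices whose images under `π` are order-isomorphic to `σ`. -/
def IsOccurrence {m n : ℕ} (σ : Equiv.Perm (Fin m)) (π : Equiv.Perm (Fin n))
    (f : Fin m → Fin n) : Prop :=
  StrictMono f ∧ ∀ j k : Fin m, π (f j) < π (f k) ↔ σ j < σ k

/-- `numOcc σ π` is the number of occurrences of the pattern `σ` in `π`. -/
noncomputable def numOcc {m n : ℕ} (σ : Equiv.Perm (Fin m)) (π : Equiv.Perm (Fin n)) : ℕ :=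
  Nat.card {f : Fin m → Fin n // IsOccurrence σ π f}

def p123 : Equiv.Perm (Fin 3) := 1
def p132 : Equiv.Perm (Fin 3) := Equiv.swap 1 2
def p213 : Equiv.Perm (Fin 3) := Equiv.swap 0 1
def p321 : Equiv.Perm (Fin 3) := Equiv.swap 0 2
def p231 : Equiv.Perm (Fin 3) := finRotate 3
def p312 : Equiv.Perm (Fin 3) := (finRotate 3)⁻¹

lemma numOcc_eq_zero_iff {m n : ℕ} (σ : Equiv.Perm (Fin m)) (π : Equiv.Perm (Fin n)) :
    numOcc σ π = 0 ↔ ∀ f, ¬ IsOccurrence σ π f := by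
  rw [numOcc, Nat.card_eq_zero]
  simp [isEmpty_subtype,
    not_infinite_iff_finite.mpr (inferInstance : Finite {f : Fin m → Fin n // IsOccurrence σ π f})]

lemma occ_aux {n : ℕ} (σ : Equiv.Perm (Fin 3)) (π : Equiv.Perm (Fin n)) {a b c : Fin n}
    (hab : a < b) (hbc : b < c)
    (h : ∀ j k : Fin 3, π (![a,b,c] j) < π (![a,b,c] k) ↔ σ j < σ k) :
    IsOccurrence σ π ![a,b,c] := by
  refine ⟨?_, h⟩
  intro x y hxy
  fin_cases x <;> fin_cases y <;>
    first
      | exact absurd hxy (by decide)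
      | simpa using hab
      | simpa using hbc
      | simpa using hab.trans hbc

lemma occ231 {n : ℕ} (π : Equiv.Perm (Fin n)) {a b c : Fin n} (hab : a < b) (hbc : b < c)
    (h1 : π c < π a) (h2 : π a < π b) : IsOccurrence p231 π ![a,b,c] := by
  refine occ_aux _ _ hab hbc ?_
  intro j k
  fin_cases j <;> fin_cases k <;>
    simp only [Fin.mk_zero, Fin.mk_one, Fin.isValue, Matrix.cons_val_zero, Matrix.cons_val_one,
      Matrix.head_cons, Matrix.cons_val_two, Matrix.tail_cons] <;>
    first
      | exact iff_of_true h1 (by decide)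
      | exact iff_of_true h2 (by decide)
      | exact iff_of_true (h1.trans h2) (by decide)
      | exact iff_of_true (h2.trans h1) (by decide)
      | exact iff_of_false (lt_irrefl _) (by decide)
      | exact iff_of_false h1.asymm (by decide)
      | exact iff_of_false h2.asymm (by decide)
      | exact iff_of_false (h1.trans h2).asymm (by decide)
      | exact iff_of_false (h2.trans h1).asymm (by decide)

set_option linter.unreachableTactic false
set_option linter.unusedTactic false

lemma occ312 {n : ℕ} (π : Equiv.Perm (Fin n)) {a b c : Fin n} (hab : a < b) (hbc : b < c)
    (h1 : π b < π c) (h2 : π c < π a) : IsOccurrence p312 π ![a,b,c] := by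
  refine occ_aux _ _ hab hbc ?_
  intro j k
  fin_cases j <;> fin_cases k <;>
    simp only [Fin.mk_zero, Fin.mk_one, Fin.isValue, Matrix.cons_val_zero, Matrix.cons_val_one,
      Matrix.head_cons, Matrix.cons_val_two, Matrix.tail_cons] <;>
    first
      | exact iff_of_true h1 (by decide)
      | exact iff_of_true h2 (by decide)
      | exact iff_of_true (h1.trans h2) (by decide)
      | exact iff_of_true (h2.trans h1) (by decide)
      | exact iff_of_false (lt_irrefl _) (by decide)
      | exact iff_of_false h1.asymm (by decide)
      | exact iff_of_false h2.asymm (by decide)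
      | exact iff_of_false (h1.trans h2).asymm (by decide)
      | exact iff_of_false (h2.trans h1).asymm (by decide)

lemma occ321 {n : ℕ} (π : Equiv.Perm (Fin n)) {a b c : Fin n} (hab : a < b) (hbc : b < c)
    (h1 : π c < π b) (h2 : π b < π a) : IsOccurrence p321 π ![a,b,c] := by
  refine occ_aux _ _ hab hbc ?_
  intro j k
  fin_cases j <;> fin_cases k <;>
    simp only [Fin.mk_zero, Fin.mk_one, Fin.isValue, Matrix.cons_val_zero, Matrix.cons_val_one,
      Matrix.head_cons, Matrix.cons_val_two, Matrix.tail_cons] <;>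
    first
      | exact iff_of_true h1 (by decide)
      | exact iff_of_true h2 (by decide)
      | exact iff_of_true (h1.trans h2) (by decide)
      | exact iff_of_true (h2.trans h1) (by decide)
      | exact iff_of_false (lt_irrefl _) (by decide)
      | exact iff_of_false h1.asymm (by decide)
      | exact iff_of_false h2.asymm (by decide)
      | exact iff_of_false (h1.trans h2).asymm (by decide)
      | exact iff_of_false (h2.trans h1).asymm (by decide)

/-- all inversions of `π` are between adjacent positions -/
def Adj {n : ℕ} (π : Equiv.Perm (Fin n)) : Prop :=
  ∀ i j : Fin n, i < j → π j < π i → (j : ℕ) = (i : ℕ) + 1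

lemma avoid_iff_adj {n : ℕ} (π : Equiv.Perm (Fin n)) :
    (numOcc p231 π = 0 ∧ numOcc p312 π = 0 ∧ numOcc p321 π = 0) ↔ Adj π := by
  rw [numOcc_eq_zero_iff, numOcc_eq_zero_iff, numOcc_eq_zero_iff]
  constructor
  · rintro ⟨h231, h312, h321⟩ i j hij hinv
    by_contra hne
    have hij' : (i : ℕ) + 1 < (j : ℕ) := by
      have := (Fin.lt_def.mp hij); omega
    set k : Fin n := ⟨(i : ℕ) + 1, lt_trans hij' j.isLt⟩ with hk
    have hik : i < k := by rw [Fin.lt_def]; simp [hk]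
    have hkj : k < j := by rw [Fin.lt_def]; simpa [hk] using hij'
    rcases lt_trichotomy (π k) (π j) with h | h | h
    · exact h312 _ ⟨(occ312 π hik hkj h hinv).1, (occ312 π hik hkj h hinv).2⟩
    · exact absurd (π.injective h) (by intro he; rw [he] at hkj; exact lt_irrefl _ hkj)
    · rcases lt_trichotomy (π k) (π i) with h' | h' | h'
      · exact h321 _ (occ321 π hik hkj h h')
      · exact absurd (π.injective h') (by intro he; rw [he] at hik; exact lt_irrefl _ hik)
      · exact h231 _ (occ231 π hik hkj hinv h')
  · intro hA
    have key : ∀ (σ : Equiv.Perm (Fin 3)), σ 2 < σ 0 → ∀ f, ¬ IsOccurrence σ π f := by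
      rintro σ hσ f ⟨hf, hiff⟩
      have h20 : π (f 2) < π (f 0) := (hiff 2 0).mpr hσ
      have h02 : f 0 < f 2 := hf (by decide)
      have h01 : f 0 < f 1 := hf (by decide)
      have h12 : f 1 < f 2 := hf (by decide)
      have := hA _ _ h02 h20
      have := Fin.lt_def.mp h01
      have := Fin.lt_def.mp h12
      omega
    exact ⟨key _ (by decide), key _ (by decide), key _ (by decide)⟩

open Equiv Equiv.Perm in
noncomputable section

def e1 {n : ℕ} (π : Perm (Fin (n+1))) : Perm (Fin (n+2)) :=
  Equiv.Perm.decomposeFin.symm (0, π)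

def e2 {n : ℕ} (π : Perm (Fin n)) : Perm (Fin (n+2)) :=
  Equiv.Perm.decomposeFin.symm (1, Equiv.Perm.decomposeFin.symm (0, π))

lemma e1_zero {n : ℕ} (π : Perm (Fin (n+1))) : e1 π 0 = 0 :=
  Equiv.Perm.decomposeFin_symm_apply_zero 0 π

lemma e1_succ {n : ℕ} (π : Perm (Fin (n+1))) (i : Fin (n+1)) : e1 π i.succ = (π i).succ := by
  rw [e1, Equiv.Perm.decomposeFin_symm_apply_succ, Equiv.swap_self]
  rfl

lemma e2_zero {n : ℕ} (π : Perm (Fin n)) : e2 π 0 = 1 :=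
  Equiv.Perm.decomposeFin_symm_apply_zero 1 _

lemma e2_one {n : ℕ} (π : Perm (Fin n)) : e2 π 1 = 0 := by
  rw [e2, Equiv.Perm.decomposeFin_symm_apply_one, Equiv.Perm.decomposeFin_symm_apply_zero]
  simp [Equiv.swap_apply_right]

lemma e2_succ_succ {n : ℕ} (π : Perm (Fin n)) (i : Fin n) :
    e2 π i.succ.succ = (π i).succ.succ := by
  rw [e2, Equiv.Perm.decomposeFin_symm_apply_succ, Equiv.Perm.decomposeFin_symm_apply_succ,
    Equiv.swap_self]
  show Equiv.swap 0 1 ((π i).succ.succ) = (π i).succ.succ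
  refine Equiv.swap_apply_of_ne_of_ne (Fin.succ_ne_zero _) ?_
  intro h
  have : (π i).succ = 0 := Fin.succ_injective _ (by simpa using h)
  exact Fin.succ_ne_zero _ this

end

lemma adj_e1_iff {n : ℕ} (π : Equiv.Perm (Fin (n+1))) : Adj (e1 π) ↔ Adj π := by
  constructor
  · intro h i j hij hinv
    have h1 : i.succ < j.succ := Fin.succ_lt_succ_iff.mpr hij
    have h2 : e1 π j.succ < e1 π i.succ := by
      rw [e1_succ, e1_succ]; exact Fin.succ_lt_succ_iff.mpr hinv
    have := h _ _ h1 h2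
    simpa [Fin.val_succ] using this
  · intro h a b hab hinv
    rcases Fin.eq_zero_or_eq_succ b with rfl | ⟨b', rfl⟩
    · exact absurd hab (Fin.not_lt_zero _).elim
    rcases Fin.eq_zero_or_eq_succ a with rfl | ⟨a', rfl⟩
    · rw [e1_zero] at hinv; exact absurd hinv (Fin.not_lt_zero _)
    · rw [e1_succ, e1_succ] at hinv
      have := h a' b' (Fin.succ_lt_succ_iff.mp hab) (Fin.succ_lt_succ_iff.mp hinv)
      simp [Fin.val_succ, this]

lemma adj_e2_iff {n : ℕ} (π : Equiv.Perm (Fin n)) : Adj (e2 π) ↔ Adj π := by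
  constructor
  · intro h i j hij hinv
    have h1 : i.succ.succ < j.succ.succ :=
      Fin.succ_lt_succ_iff.mpr (Fin.succ_lt_succ_iff.mpr hij)
    have h2 : e2 π j.succ.succ < e2 π i.succ.succ := by
      rw [e2_succ_succ, e2_succ_succ]
      exact Fin.succ_lt_succ_iff.mpr (Fin.succ_lt_succ_iff.mpr hinv)
    have := h _ _ h1 h2
    simpa [Fin.val_succ] using this
  · intro h a b hab hinv
    rcases Fin.eq_zero_or_eq_succ b with rfl | ⟨b', rfl⟩
    · exact absurd hab (Fin.not_lt_zero _).elim
    rcases Fin.eq_zero_or_eq_succ a with rfl | ⟨a', rfl⟩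
    · -- a = 0, e2 π 0 = 1; inversion means e2 π b'.succ < 1, i.e. = 0, so b'.succ = 1
      rcases Fin.eq_zero_or_eq_succ b' with rfl | ⟨b'', rfl⟩
      · simp
      · rw [e2_zero, e2_succ_succ] at hinv
        have := Fin.lt_def.mp hinv
        simp [Fin.val_succ] at this
    · rcases Fin.eq_zero_or_eq_succ a' with rfl | ⟨a'', rfl⟩
      · -- a = 1 : e2 π 1 = 0, nothing below
        rw [Fin.succ_zero_eq_one, e2_one] at hinv
        exact absurd hinv (Fin.not_lt_zero _)
      · -- a = a''+2, so b = b''+2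
        rcases Fin.eq_zero_or_eq_succ b' with rfl | ⟨b'', rfl⟩
        · have := Fin.lt_def.mp hab
          simp [Fin.val_succ] at this
        · rw [e2_succ_succ, e2_succ_succ] at hinv
          have hai : a'' < b'' :=
            Fin.succ_lt_succ_iff.mp (Fin.succ_lt_succ_iff.mp hab)
          have hin : π b'' < π a'' :=
            Fin.succ_lt_succ_iff.mp (Fin.succ_lt_succ_iff.mp hinv)
          have := h _ _ hai hin
          simp [Fin.val_succ, this]

lemma decomposeFin_fst {n : ℕ} (τ : Equiv.Perm (Fin (n+1))) :
    (Equiv.Perm.decomposeFin τ).1 = τ 0 := by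
  conv_rhs => rw [← Equiv.Perm.decomposeFin.symm_apply_apply τ]
  exact (Equiv.Perm.decomposeFin_symm_apply_zero _ _).symm

lemma adj_apply_zero {n : ℕ} (τ : Equiv.Perm (Fin (n+2))) (h : Adj τ) : τ 0 = 0 ∨ τ 0 = 1 := by
  by_contra hc
  push_neg at hc
  obtain ⟨h0, h1⟩ := hc
  have hv0 : (τ 0 : ℕ) ≠ 0 := fun he => h0 (Fin.ext (by simpa using he))
  have hv1 : (τ 0 : ℕ) ≠ 1 := fun he => h1 (Fin.ext (by simpa using he))
  have hne0 : τ⁻¹ 0 ≠ 0 := fun he => h0 ((congrArg τ he.symm).trans (τ.apply_symm_apply 0))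
  have hne1 : τ⁻¹ 1 ≠ 0 := fun he => h1 ((congrArg τ he.symm).trans (τ.apply_symm_apply 1))
  have k0 := h 0 (τ⁻¹ 0) (Fin.pos_of_ne_zero hne0)
    (by rw [show ∀ x, τ (τ⁻¹ x) = x from τ.apply_symm_apply]; rw [Fin.lt_def]; exact Nat.pos_of_ne_zero hv0)
  have k1 := h 0 (τ⁻¹ 1) (Fin.pos_of_ne_zero hne1)
    (by rw [show ∀ x, τ (τ⁻¹ x) = x from τ.apply_symm_apply]; rw [Fin.lt_def]; simp; omega)
  have heq : τ⁻¹ 0 = τ⁻¹ 1 := Fin.ext (by omega)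
  have : (0 : Fin (n+2)) = 1 := τ⁻¹.injective heq
  exact absurd (congrArg Fin.val this) (by simp)

def G (n : ℕ) : ({π : Equiv.Perm (Fin (n+1)) // Adj π} ⊕ {π : Equiv.Perm (Fin n) // Adj π}) →
    {π : Equiv.Perm (Fin (n+2)) // Adj π} :=
  Sum.elim (fun p => ⟨e1 p.1, (adj_e1_iff p.1).mpr p.2⟩)
    (fun p => ⟨e2 p.1, (adj_e2_iff p.1).mpr p.2⟩)

lemma G_bijective (n : ℕ) : Function.Bijective (G n) := by
  constructor
  · rintro (⟨a, ha⟩ | ⟨a, ha⟩) (⟨b, hb⟩ | ⟨b, hb⟩) hxy <;>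
      simp only [G, Sum.elim_inl, Sum.elim_inr, Subtype.mk.injEq] at hxy
    · have := Equiv.Perm.decomposeFin.symm.injective (hxy : _ = _)
      simp only [Prod.mk.injEq] at this
      simp [this.2]
    · exfalso
      have h0 : e1 a 0 = e2 b 0 := by rw [hxy]
      rw [e1_zero, e2_zero] at h0
      exact absurd (congrArg Fin.val h0) (by simp)
    · exfalso
      have h0 : e2 a 0 = e1 b 0 := by rw [hxy]
      rw [e1_zero, e2_zero] at h0
      exact absurd (congrArg Fin.val h0) (by simp)
    · have h1 := Equiv.Perm.decomposeFin.symm.injective (hxy : _ = _)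
      simp only [Prod.mk.injEq] at h1
      have h2 := Equiv.Perm.decomposeFin.symm.injective h1.2
      simp only [Prod.mk.injEq] at h2
      simp [h2.2]
  · rintro ⟨τ, hτ⟩
    rcases adj_apply_zero τ hτ with h0 | h0
    · set π := (Equiv.Perm.decomposeFin τ).2 with hπ
      have hτe : τ = e1 π := by
        rw [e1, ← h0, ← decomposeFin_fst]
        exact (Equiv.Perm.decomposeFin.symm_apply_apply τ).symm
      refine ⟨Sum.inl ⟨π, (adj_e1_iff π).mp (hτe ▸ hτ)⟩, ?_⟩
      apply Subtype.ext
      simp only [G, Sum.elim_inl]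
      exact hτe.symm
    · have hτ1 : τ 1 = 0 := by
        have hne : τ⁻¹ 0 ≠ 0 := fun he => by
          have he2 : τ 0 = 0 := (congrArg τ he.symm).trans (τ.apply_symm_apply 0)
          rw [h0] at he2
          exact absurd (congrArg Fin.val he2) (by simp)
        have hv : τ (τ⁻¹ 0) < τ 0 := by
          rw [show ∀ x, τ (τ⁻¹ x) = x from τ.apply_symm_apply, h0, Fin.lt_def]; simp
        have := hτ _ _ (Fin.pos_of_ne_zero hne) hv
        have he1 : τ⁻¹ 0 = 1 := Fin.ext (by simpa using this)
        rw [← he1, show ∀ x, τ (τ⁻¹ x) = x from τ.apply_symm_apply]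
      set σ := (Equiv.Perm.decomposeFin τ).2 with hσdef
      have hτσ : τ = Equiv.Perm.decomposeFin.symm (1, σ) := by
        rw [← h0, ← decomposeFin_fst]
        exact (Equiv.Perm.decomposeFin.symm_apply_apply τ).symm
      have hσ0 : σ 0 = 0 := by
        have h1 := Equiv.Perm.decomposeFin_symm_apply_one σ (1 : Fin (n+2))
        rw [← hτσ, hτ1] at h1
        have h2 : Equiv.swap (0 : Fin (n+2)) 1 ((σ 0).succ) = Equiv.swap 0 1 1 := by
          rw [← h1, Equiv.swap_apply_right]
        have h3 : ((σ 0).succ : Fin (n+2)) = 1 := (Equiv.swap 0 1).injective h2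
        exact Fin.succ_injective _ (h3.trans Fin.succ_zero_eq_one.symm)
      set π := (Equiv.Perm.decomposeFin σ).2 with hπdef
      have hσπ : σ = Equiv.Perm.decomposeFin.symm (0, π) := by
        rw [← hσ0, ← decomposeFin_fst]
        exact (Equiv.Perm.decomposeFin.symm_apply_apply σ).symm
      have hτe : τ = e2 π := by rw [e2, ← hσπ, hτσ]
      refine ⟨Sum.inr ⟨π, (adj_e2_iff π).mp (hτe ▸ hτ)⟩, ?_⟩
      apply Subtype.ext
      simp only [G, Sum.elim_inr]
      exact hτe.symm

lemma card_step (n : ℕ) :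
    Nat.card {π : Equiv.Perm (Fin (n+2)) // Adj π} =
      Nat.card {π : Equiv.Perm (Fin (n+1)) // Adj π} + Nat.card {π : Equiv.Perm (Fin n) // Adj π} := by
  rw [← Nat.card_sum]
  exact Nat.card_congr (Equiv.ofBijective _ (G_bijective n)).symm

lemma card_adj (n : ℕ) :
    Nat.card {π : Equiv.Perm (Fin n) // Adj π} = Nat.fib (n+1) := by
  induction n using Nat.strong_induction_on with
  | _ n ih =>
    match n with
    | 0 =>
      have hall : ∀ π : Equiv.Perm (Fin 0), Adj π := fun π i => i.elim0
      rw [Nat.card_congr (Equiv.subtypeUnivEquiv hall), Nat.card_eq_fintype_card,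
        Fintype.card_perm, Fintype.card_fin]
      rfl
    | 1 =>
      have hall : ∀ π : Equiv.Perm (Fin 1), Adj π := by
        intro π i j hij _
        have hi := i.isLt
        have hj := j.isLt
        have := Fin.lt_def.mp hij
        omega
      rw [Nat.card_congr (Equiv.subtypeUnivEquiv hall), Nat.card_eq_fintype_card,
        Fintype.card_perm, Fintype.card_fin]
      rfl
    | (m+2) =>
      rw [card_step, ih (m+1) (by omega), ih m (by omega)]
      conv_rhs => rw [show m + 2 + 1 = (m+1) + 2 from rfl, Nat.fib_add_two]
      omega


theorem card_avoid_231_312_321 (n : ℕ) :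
    Nat.card {π : Equiv.Perm (Fin n) //
        numOcc p231 π = 0 ∧ numOcc p312 π = 0 ∧ numOcc p321 π = 0} =
      Nat.fib (n + 1) := by
  rw [Nat.card_congr (Equiv.subtypeEquivRight avoid_iff_adj), card_adj]
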